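/- Let p be a prime, n a positive integer, and let G = ⟨g, h⟩ be a finite nilpotent group of nilpotency class 2 with o(h) = p^n and g ∉ N_G(⟨h^{p^i}⟩) for all 0 ≤ i < n. Set c = g^{-1}·h·g·h^{-1}. Then c is central in G of order exactly p^n, the subgroups ⟨h⟩ and ⟨c⟩ intersect trivially, the center of G equals ⟨g^{p^n}, c⟩, and the quotient G/Z(G) is isomorphic to C_{p^n} × C_{p^n}. -/

import Mathlib

set_option maxHeartbeats 2000000


/-- Structural facts from the proof of Theorem 4.1: for a finite group `G = ⟨g, h⟩` of
nilpotency class `2` (commutator subgroup central, non-abelian) with `o(h) = p^n` and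
`g ∉ N_G(⟨h^{p^i}⟩)` for all `0 ≤ i < n`, the element `c = g⁻¹·h·g·h⁻¹` is central of
order exactly `p^n`, `⟨h⟩ ∩ ⟨c⟩ = 1`, `Z(G) = ⟨g^{p^n}, c⟩` and
`G/Z(G) ≅ C_{p^n} × C_{p^n}`. -/
theorem stmt_19 (p : ℕ) (hp : p.Prime) (n : ℕ) (hn : 0 < n)
    {G : Type*} [Group G] [Fintype G]
    (g h : G) (hgen : Subgroup.closure ({g, h} : Set G) = ⊤)
    (hclass : commutator G ≤ Subgroup.center G) (hnab : ¬ ∀ a b : G, a * b = b * a)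
    (hord : orderOf h = p ^ n)
    (hnorm : ∀ i : ℕ, i < n → g ∉ Subgroup.normalizer (Subgroup.zpowers (h ^ p ^ i) : Set G)) :
    g⁻¹ * h * g * h⁻¹ ∈ Subgroup.center G ∧
    orderOf (g⁻¹ * h * g * h⁻¹) = p ^ n ∧
    Subgroup.zpowers h ⊓ Subgroup.zpowers (g⁻¹ * h * g * h⁻¹) = ⊥ ∧
    Subgroup.center G = Subgroup.closure {g ^ p ^ n, g⁻¹ * h * g * h⁻¹} ∧
    Nonempty ((G ⧸ Subgroup.center G) ≃*
      (Multiplicative (ZMod (p ^ n)) × Multiplicative (ZMod (p ^ n)))) := by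
  set N := p ^ n with hN
  set c : G := g⁻¹ * h * g * h⁻¹ with hc
  have hcz : c ∈ Subgroup.center G := by
    open scoped commutatorElement in
    have hc_comm : c = ⁅g⁻¹, h⁆ := by rw [commutatorElement_def, inv_inv]
    apply hclass
    rw [hc_comm, commutator_def]
    exact Subgroup.commutator_mem_commutator (Subgroup.mem_top _) (Subgroup.mem_top _)
  have hcx : ∀ x : G, Commute c x := fun x => (Subgroup.mem_center_iff.mp hcz x).symm
  have conj_zpow' : ∀ (a b : G) (m : ℤ), (a * b * a⁻¹) ^ m = a * b ^ m * a⁻¹ := by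
    intro a b m
    have := map_zpow (MulAut.conj a) b m
    simp only [MulAut.conj_apply] at this
    exact this.symm
  have h1 : g⁻¹ * h * g = c * h := by rw [hc]; group
  have hconj : ∀ k : ℤ, g⁻¹ * h ^ k * g = c ^ k * h ^ k := by
    intro k
    have e1 : (g⁻¹ * h * g) ^ k = g⁻¹ * h ^ k * g := by
      have := conj_zpow' g⁻¹ h k; rwa [inv_inv] at this
    rw [← e1, h1, (hcx h).mul_zpow]
  have hckk : ∀ k : ℤ, c ^ k = g⁻¹ * h ^ k * g * (h ^ k)⁻¹ := by
    intro k; rw [hconj k]; group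
  have hhN : h ^ (N : ℤ) = 1 := by
    rw [zpow_natCast, ← hord, pow_orderOf_eq_one]
  have hcN1 : c ^ (N : ℕ) = 1 := by
    have : c ^ (N : ℤ) = 1 := by rw [hckk, hhN]; group
    rwa [zpow_natCast] at this
  have hordc : orderOf c = N := by
    have hdvd : orderOf c ∣ N := orderOf_dvd_of_pow_eq_one hcN1
    obtain ⟨i, hile, hio⟩ := (Nat.dvd_prime_pow hp).mp (hN ▸ hdvd)
    rcases lt_or_eq_of_le hile with hi | hi
    · exfalso
      apply hnorm i hi
      have hci : c ^ (p ^ i) = 1 := by rw [← hio]; exact pow_orderOf_eq_one c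
      have hfix : g⁻¹ * h ^ (p ^ i) * g = h ^ (p ^ i) := by
        have := hconj ((p ^ i : ℕ) : ℤ)
        rw [zpow_natCast, zpow_natCast, hci, one_mul] at this
        exact this
      have hfix' : g * h ^ p ^ i * g⁻¹ = h ^ p ^ i := by
        conv_lhs => rw [← hfix]
        group
      have A : ∀ m : ℤ, g * (h ^ p ^ i) ^ m * g⁻¹ = (h ^ p ^ i) ^ m := fun m => by
        rw [← conj_zpow' g _ m, hfix']
      have B : ∀ m : ℤ, g⁻¹ * (h ^ p ^ i) ^ m * g = (h ^ p ^ i) ^ m := fun m => by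
        have := conj_zpow' g⁻¹ (h ^ p ^ i) m
        rw [inv_inv] at this
        rw [← this, hfix]
      rw [Subgroup.mem_normalizer_iff]
      intro x
      simp only [Subgroup.mem_zpowers_iff]
      constructor
      · rintro ⟨m, rfl⟩; exact ⟨m, (A m).symm⟩
      · rintro ⟨m, hm⟩
        refine ⟨m, ?_⟩
        rw [← B m, hm]
        group
    · rw [hio, hi]
  have hcmove : ∀ (e : ℤ) (x : G), c ^ e * x = x * c ^ e := fun e x => ((hcx x).zpow_left e)
  have hmid : ∀ (e : ℤ) (x y : G), x * c ^ e * y = x * y * c ^ e := fun e x y => by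
    rw [mul_assoc, hcmove e y, ← mul_assoc]
  have h_pow_central : ∀ k : ℤ, h ^ k ∈ Subgroup.center G → h ^ k = 1 := by
    intro k hk
    have hgz := Subgroup.mem_center_iff.mp hk g
    have h2 : g⁻¹ * h ^ k * g = h ^ k := by
      rw [mul_assoc, ← hgz, ← mul_assoc, inv_mul_cancel, one_mul]
    have hck1 : c ^ k * h ^ k = 1 * h ^ k := by rw [one_mul, ← hconj k, h2]
    have hck : c ^ k = 1 := mul_right_cancel hck1
    have hdk : (N : ℤ) ∣ k := by
      rw [← hordc]; exact orderOf_dvd_iff_zpow_eq_one.mpr hck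
    refine orderOf_dvd_iff_zpow_eq_one.mp ?_
    rw [hord]; exact hdk
  -- exchange
  have step1 : ∀ b : ℤ, h ^ b * g * (h ^ b)⁻¹ = g * c ^ b := by
    intro b
    calc h ^ b * g * (h ^ b)⁻¹ = g * (g⁻¹ * h ^ b * g) * (h ^ b)⁻¹ := by group
    _ = g * (c ^ b * h ^ b) * (h ^ b)⁻¹ := by rw [hconj b]
    _ = g * c ^ b := by group
  have step2 : ∀ a b : ℤ, h ^ b * g ^ a * (h ^ b)⁻¹ = g ^ a * c ^ (a * b) := by
    intro a b
    have e := conj_zpow' (h ^ b) g a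
    rw [step1 b] at e
    rw [← e, ((hcx g).symm.zpow_right b).mul_zpow, ← zpow_mul, mul_comm b a]
  have hx : ∀ a b : ℤ, h ^ b * g ^ a = g ^ a * c ^ (a * b) * h ^ b := by
    intro a b
    rw [← step2 a b]; group
  have key : ∀ a b e a' b' e' : ℤ, (g ^ a * h ^ b * c ^ e) * (g ^ a' * h ^ b' * c ^ e')
      = g ^ (a + a') * h ^ (b + b') * c ^ (e + e' + a' * b) := by
    intro a b e a' b' e'
    calc (g ^ a * h ^ b * c ^ e) * (g ^ a' * h ^ b' * c ^ e')
        = g ^ a * h ^ b * (g ^ a' * h ^ b' * c ^ e') * c ^ e := by rw [hmid]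
      _ = g ^ a * (h ^ b * g ^ a') * (h ^ b' * (c ^ e' * c ^ e)) := by group
      _ = g ^ a * (g ^ a' * c ^ (a' * b) * h ^ b) * (h ^ b' * (c ^ e' * c ^ e)) := by
          rw [hx a' b]
      _ = g ^ a * g ^ a' * c ^ (a' * b) * (h ^ b * (h ^ b' * (c ^ e' * c ^ e))) := by group
      _ = g ^ a * g ^ a' * (h ^ b * (h ^ b' * (c ^ e' * c ^ e))) * c ^ (a' * b) := by rw [hmid]
      _ = g ^ (a + a') * h ^ (b + b') * c ^ (e + e' + a' * b) := by group
  have hrep : ∀ z : G, ∃ a b e : ℤ, z = g ^ a * h ^ b * c ^ e := by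
    intro z
    have hz : z ∈ Subgroup.closure ({g, h} : Set G) := hgen ▸ Subgroup.mem_top z
    refine Subgroup.closure_induction
      (p := fun x _ => ∃ a b e : ℤ, x = g ^ a * h ^ b * c ^ e) ?_ ?_ ?_ ?_ hz
    · intro x hxm
      simp only [Set.mem_insert_iff, Set.mem_singleton_iff] at hxm
      rcases hxm with rfl | rfl
      · exact ⟨1, 0, 0, by simp⟩
      · exact ⟨0, 1, 0, by simp⟩
    · exact ⟨0, 0, 0, by simp⟩
    · rintro x y hxc hyc ⟨a, b, e, rfl⟩ ⟨a', b', e', rfl⟩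
      exact ⟨a + a', b + b', e + e' + a' * b, key a b e a' b' e'⟩
    · rintro x hxc ⟨a, b, e, rfl⟩
      refine ⟨-a, -b, a * b - e, ?_⟩
      have h1 : (g ^ (-a) * h ^ (-b) * c ^ (a * b - e)) * (g ^ a * h ^ b * c ^ e) = 1 := by
        rw [key]
        have e1 : -a + a = 0 := by ring
        have e2 : -b + b = 0 := by ring
        have e3 : a * b - e + e + a * -b = 0 := by ring
        rw [e1, e2, e3]; simp
      exact (eq_inv_of_mul_eq_one_left h1).symm
  have central_rep : ∀ a b e : ℤ, g ^ a * h ^ b * c ^ e ∈ Subgroup.center G →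
      (N : ℤ) ∣ a ∧ (N : ℤ) ∣ b := by
    intro a b e hz
    have hcomm_h : h * (g ^ a * h ^ b * c ^ e) = (g ^ a * h ^ b * c ^ e) * h :=
      Subgroup.mem_center_iff.mp hz h
    have hcomm_g : g * (g ^ a * h ^ b * c ^ e) = (g ^ a * h ^ b * c ^ e) * g :=
      Subgroup.mem_center_iff.mp hz g
    constructor
    · have L := key 0 1 0 a b e
      have R := key a b e 0 1 0
      simp only [zpow_zero, zpow_one, one_mul, mul_one, zero_add, add_zero, mul_zero,
        zero_mul] at L R
      rw [add_comm 1 b] at L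
      have heq : g ^ a * h ^ (b + 1) * c ^ (e + a) = g ^ a * h ^ (b + 1) * c ^ e := by
        rw [← L, ← R, hcomm_h]
      have hca : c ^ (e + a) = c ^ e := mul_left_cancel heq
      have hca1 : c ^ a = 1 := by
        have h2 : c ^ e * c ^ a = c ^ e * 1 := by rw [mul_one, ← zpow_add]; exact hca
        exact mul_left_cancel h2
      rw [← hordc]; exact orderOf_dvd_iff_zpow_eq_one.mpr hca1
    · have L := key 1 0 0 a b e
      have R := key a b e 1 0 0
      simp only [zpow_zero, zpow_one, one_mul, mul_one, zero_add, add_zero, mul_zero,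
        zero_mul, one_mul] at L R
      rw [add_comm 1 a] at L
      have heq : g ^ (a + 1) * h ^ b * c ^ e = g ^ (a + 1) * h ^ b * c ^ (e + b) := by
        rw [← L, ← R, hcomm_g]
      have hca : c ^ e = c ^ (e + b) := mul_left_cancel heq
      have hcb1 : c ^ b = 1 := by
        have h2 : c ^ e * c ^ b = c ^ e * 1 := by rw [mul_one, ← zpow_add]; exact hca.symm
        exact mul_left_cancel h2
      rw [← hordc]; exact orderOf_dvd_iff_zpow_eq_one.mpr hcb1
  have hgNc : g ^ N ∈ Subgroup.center G := by
    rw [Subgroup.mem_center_iff]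
    intro x
    have hx_mem : x ∈ Subgroup.closure ({g, h} : Set G) := hgen ▸ Subgroup.mem_top x
    have : Commute x (g ^ N) := by
      refine Subgroup.closure_induction (p := fun y _ => Commute y (g ^ N)) ?_ ?_ ?_ ?_ hx_mem
      · intro y hym
        simp only [Set.mem_insert_iff, Set.mem_singleton_iff] at hym
        rcases hym with rfl | rfl
        · exact (Commute.refl y).pow_right N
        · have e := step2 (N : ℤ) 1
          have hcN : c ^ ((N : ℤ) * 1) = 1 := by
            rw [mul_one, zpow_natCast, hcN1]
          rw [hcN, mul_one, zpow_one, zpow_natCast] at e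
          have : y * g ^ N = g ^ N * y := by
            calc y * g ^ N = y * g ^ N * y⁻¹ * y := by group
            _ = g ^ N * y := by rw [e]
          exact this
      · exact Commute.one_left _
      · intro x y _ _ hx hy; exact hx.mul_left hy
      · intro x _ hx; exact hx.inv_left
    exact this
  have hQcomm : ∀ x y : G ⧸ Subgroup.center G, x * y = y * x := by
    intro x y
    obtain ⟨a, rfl⟩ := QuotientGroup.mk_surjective x
    obtain ⟨b, rfl⟩ := QuotientGroup.mk_surjective y
    have hq : ((a * b : G) : G ⧸ Subgroup.center G) = ((b * a : G) : _) := by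
      rw [QuotientGroup.eq]
      open scoped commutatorElement in
      have he : (a * b)⁻¹ * (b * a) = ⁅b⁻¹, a⁻¹⁆ := by
        rw [commutatorElement_def, inv_inv, inv_inv]; group
      rw [he]
      exact hclass (Subgroup.commutator_mem_commutator (Subgroup.mem_top _)
        (Subgroup.mem_top _))
    simpa using hq
  set Q := G ⧸ Subgroup.center G with hQ
  let π : G →* Q := QuotientGroup.mk' (Subgroup.center G)
  have mk_hom : ∀ (x : G) (m : ℤ), m • Additive.ofMul (π x) = Additive.ofMul (π (x ^ m)) := by
    intro x m
    rw [map_zpow]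
    exact (ofMul_zpow m (π x)).symm
  have hπg : π (g ^ (N : ℤ)) = 1 := by
    rw [zpow_natCast]
    exact (QuotientGroup.eq_one_iff _).mpr hgNc
  have hπh : π (h ^ (N : ℤ)) = 1 := by
    rw [zpow_natCast, ← hord, pow_orderOf_eq_one]
    exact map_one π
  have hg0 : (zmultiplesHom (Additive Q) (Additive.ofMul (π g))) (N : ℤ) = 0 := by
    rw [zmultiplesHom_apply, mk_hom, hπg]; rfl
  have hh0 : (zmultiplesHom (Additive Q) (Additive.ofMul (π h))) (N : ℤ) = 0 := by
    rw [zmultiplesHom_apply, mk_hom, hπh]; rfl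
  let φg : Multiplicative (ZMod N) →* Q :=
    AddMonoidHom.toMultiplicativeLeft (ZMod.lift N ⟨_, hg0⟩)
  let φh : Multiplicative (ZMod N) →* Q :=
    AddMonoidHom.toMultiplicativeLeft (ZMod.lift N ⟨_, hh0⟩)
  have hφg : ∀ m : ℤ, φg (Multiplicative.ofAdd ((m : ZMod N))) = π (g ^ m) := by
    intro m
    show Additive.toMul ((ZMod.lift N ⟨_, hg0⟩) ((m : ZMod N))) = _
    rw [ZMod.lift_coe, zmultiplesHom_apply, mk_hom]
    rfl
  have hφh : ∀ m : ℤ, φh (Multiplicative.ofAdd ((m : ZMod N))) = π (h ^ m) := by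
    intro m
    show Additive.toMul ((ZMod.lift N ⟨_, hh0⟩) ((m : ZMod N))) = _
    rw [ZMod.lift_coe, zmultiplesHom_apply, mk_hom]
    rfl
  let φ : Multiplicative (ZMod N) × Multiplicative (ZMod N) →* Q :=
    { toFun := fun z => φg z.1 * φh z.2
      map_one' := by simp
      map_mul' := by
        intro z w
        simp only [Prod.fst_mul, Prod.snd_mul, map_mul]
        rw [mul_assoc, mul_assoc, ← mul_assoc (φg w.1), hQcomm (φg w.1) (φh z.2), mul_assoc] }
  have hφapp : ∀ a b : ℤ,
      φ (Multiplicative.ofAdd ((a : ZMod N)), Multiplicative.ofAdd ((b : ZMod N)))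
        = π (g ^ a) * π (h ^ b) := by
    intro a b
    show φg _ * φh _ = _
    rw [hφg, hφh]
  have hφsurj : Function.Surjective φ := by
    intro q
    obtain ⟨z, rfl⟩ := QuotientGroup.mk'_surjective (Subgroup.center G) q
    obtain ⟨a, b, e, rfl⟩ := hrep z
    refine ⟨(Multiplicative.ofAdd ((a : ZMod N)), Multiplicative.ofAdd ((b : ZMod N))), ?_⟩
    rw [hφapp]
    have hce : π (c ^ e) = 1 := (QuotientGroup.eq_one_iff _).mpr (Subgroup.zpow_mem _ hcz e)
    rw [map_mul, map_mul, hce, mul_one]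
  have hφinj : Function.Injective φ := by
    rw [injective_iff_map_eq_one]
    rintro ⟨x, y⟩ hxy
    obtain ⟨a, ha⟩ := ZMod.intCast_surjective (Multiplicative.toAdd x)
    obtain ⟨b, hb⟩ := ZMod.intCast_surjective (Multiplicative.toAdd y)
    have hx : x = Multiplicative.ofAdd ((a : ZMod N)) := by rw [ha]; rfl
    have hy : y = Multiplicative.ofAdd ((b : ZMod N)) := by rw [hb]; rfl
    rw [hx, hy] at hxy ⊢
    rw [hφapp, ← map_mul] at hxy
    have hmem : g ^ a * h ^ b ∈ Subgroup.center G := (QuotientGroup.eq_one_iff _).mp hxy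
    have hmem' : g ^ a * h ^ b * c ^ (0 : ℤ) ∈ Subgroup.center G := by
      rw [zpow_zero, mul_one]; exact hmem
    obtain ⟨hda, hdb⟩ := central_rep a b 0 hmem'
    have hza : ((a : ZMod N)) = 0 := (ZMod.intCast_zmod_eq_zero_iff_dvd a N).mpr hda
    have hzb : ((b : ZMod N)) = 0 := (ZMod.intCast_zmod_eq_zero_iff_dvd b N).mpr hdb
    rw [hza, hzb]
    rfl
  refine ⟨hcz, hordc, ?_, ?_, ⟨(MulEquiv.ofBijective φ ⟨hφinj, hφsurj⟩).symm⟩⟩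
  · rw [eq_bot_iff]
    rintro x hx
    rw [Subgroup.mem_inf] at hx
    obtain ⟨hx1, hx2⟩ := hx
    obtain ⟨a, ha⟩ := Subgroup.mem_zpowers_iff.mp hx1
    obtain ⟨b, hb⟩ := Subgroup.mem_zpowers_iff.mp hx2
    have hxc : x ∈ Subgroup.center G := by
      rw [← hb]; exact Subgroup.zpow_mem _ hcz b
    have ha1 : h ^ a = 1 := h_pow_central a (by rw [ha]; exact hxc)
    rw [Subgroup.mem_bot, ← ha]
    exact ha1
  · apply le_antisymm
    · intro z hz
      obtain ⟨a, b, e, rfl⟩ := hrep z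
      obtain ⟨hda, hdb⟩ := central_rep a b e hz
      obtain ⟨a', rfl⟩ := hda
      have hb1 : h ^ b = 1 := by
        refine orderOf_dvd_iff_zpow_eq_one.mp ?_
        rw [hord]; exact hdb
      rw [hb1, mul_one]
      have hgsplit : g ^ ((N : ℤ) * a') = (g ^ N) ^ a' := by
        rw [zpow_mul, zpow_natCast]
      rw [hgsplit]
      exact Subgroup.mul_mem _
        (Subgroup.zpow_mem _ (Subgroup.subset_closure (Set.mem_insert _ _)) a')
        (Subgroup.zpow_mem _ (Subgroup.subset_closure (Set.mem_insert_of_mem _ (Set.mem_singleton c))) e)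
    · rw [Subgroup.closure_le]
      intro x hxm
      simp only [Set.mem_insert_iff, Set.mem_singleton_iff] at hxm
      rcases hxm with rfl | rfl
      · exact hgNc
      · exact hcz
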